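/- arXiv:1105.1305 — 4 statements merged into one kernel-verified Lean document; each statement's English description precedes it below -/
import Mathlib

section
/- Let b₁, b₂ be integers. The natural density of the set of integers n such that both n + b₁ and n + b₂ are squarefree, restricted to a fixed residue class modulo 36 in which both n + b₁ and n + b₂ avoid divisibility by 4 and 9, is (1/36)·∏_{p ≥ 5, p² | b₁ − b₂}(1 − 1/p²) · ∏_{p ≥ 5, p² ∤ b₁ − b₂}(1 − 2/p²). -/
open Filter Real Finset


lemma mod_mul_mod (w u s t : ℕ) (hs : 0 < s) (h : w ≡ u [MOD s]) (hu : u < s) :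
    w % (s * t) % s = u := by
  have h1 : w % (s * t) % s = w % s := Nat.mod_mod_of_dvd w (Dvd.intro t rfl)
  have h2 : w % s = u % s := h
  rw [h1, h2, Nat.mod_eq_of_lt hu]

-- L2: CRT counting
lemma crt_count (s t : ℕ) (hco : Nat.Coprime s t)
    (P Q : ℕ → Prop) [DecidablePred P] [DecidablePred Q]
    (hP : ∀ n, P n ↔ P (n % s)) (hQ : ∀ n, Q n ↔ Q (n % t)) :
    ((range (s*t)).filter (fun n => P n ∧ Q n)).card
      = ((range s).filter P).card * ((range t).filter Q).card := by
  rcases Nat.eq_zero_or_pos s with rfl | hs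
  · simp
  rcases Nat.eq_zero_or_pos t with rfl | ht
  · simp
  rw [← Finset.card_product]
  apply Finset.card_bij (fun n _ => (n % s, n % t))
  · intro n hn
    simp only [mem_filter, mem_range] at hn
    simp only [Finset.mem_product, mem_filter, mem_range]
    exact ⟨⟨Nat.mod_lt _ hs, (hP n).mp hn.2.1⟩, ⟨Nat.mod_lt _ ht, (hQ n).mp hn.2.2⟩⟩
  · intro n₁ h₁ n₂ h₂ h
    simp only [mem_filter, mem_range] at h₁ h₂
    simp only [Prod.mk.injEq] at h
    have h1 : n₁ ≡ n₂ [MOD s] := by unfold Nat.ModEq; omega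
    have h2 : n₁ ≡ n₂ [MOD t] := by unfold Nat.ModEq; omega
    have h3 := (Nat.modEq_and_modEq_iff_modEq_mul hco).mp ⟨h1, h2⟩
    unfold Nat.ModEq at h3
    rwa [Nat.mod_eq_of_lt h₁.1, Nat.mod_eq_of_lt h₂.1] at h3
  · rintro ⟨u, v⟩ huv
    simp only [Finset.mem_product, mem_filter, mem_range] at huv
    obtain ⟨⟨hu, hPu⟩, ⟨hv, hQv⟩⟩ := huv
    obtain ⟨w, hw1, hw2⟩ := Nat.chineseRemainder hco u v
    have hws : w % (s*t) % s = u := mod_mul_mod w u s t hs hw1 hu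
    have hwt : w % (s*t) % t = v := by
      have := mod_mul_mod w v t s ht hw2 hv
      rwa [Nat.mul_comm t s] at this
    refine ⟨w % (s*t), ?_, ?_⟩
    · simp only [mem_filter, mem_range]
      refine ⟨Nat.mod_lt _ (Nat.mul_pos hs ht), ?_, ?_⟩
      · rw [hP (w % (s*t)), hws]; exact hPu
      · rw [hQ (w % (s*t)), hwt]; exact hQv
    · simp only [Prod.mk.injEq]; exact ⟨hws, hwt⟩

lemma dvd_add_mod_iff (d T n b : ℕ) (hdT : d ∣ T) : d ∣ (n % T + b) ↔ d ∣ (n + b) := by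
  have h : n % T ≡ n [MOD d] := (Nat.mod_modEq n T).of_dvd hdT
  have h2 : n % T + b ≡ n + b [MOD d] := h.add_right b
  constructor
  · intro hd
    exact Nat.modEq_zero_iff_dvd.mp (h2.symm.trans (Nat.modEq_zero_iff_dvd.mpr hd))
  · intro hd
    exact Nat.modEq_zero_iff_dvd.mp (h2.trans (Nat.modEq_zero_iff_dvd.mpr hd))

lemma pred_period (a b₁ b₂ : ℕ) (F : Finset ℕ) (T : ℕ) (h36 : 36 ∣ T)
    (hFT : ∀ p ∈ F, p^2 ∣ T) (n : ℕ) :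
    ((n % T) % 36 = a ∧ ∀ p ∈ F, ¬(p^2 ∣ n % T + b₁) ∧ ¬(p^2 ∣ n % T + b₂))
      ↔ (n % 36 = a ∧ ∀ p ∈ F, ¬(p^2 ∣ n + b₁) ∧ ¬(p^2 ∣ n + b₂)) := by
  rw [Nat.mod_mod_of_dvd n h36]
  constructor
  · rintro ⟨h1, h2⟩
    refine ⟨h1, fun p hp => ?_⟩
    obtain ⟨hA, hB⟩ := h2 p hp
    rw [dvd_add_mod_iff _ T _ _ (hFT p hp)] at hA hB
    exact ⟨hA, hB⟩
  · rintro ⟨h1, h2⟩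
    refine ⟨h1, fun p hp => ?_⟩
    obtain ⟨hA, hB⟩ := h2 p hp
    rw [← dvd_add_mod_iff _ T _ _ (hFT p hp)] at hA hB
    exact ⟨hA, hB⟩

lemma count_mod_single (T aa : ℕ) (ha : aa < T) :
    ((range T).filter (fun n => n % T = aa)).card = 1 := by
  have h : (range T).filter (fun n => n % T = aa) = {aa} := by
    ext n
    simp only [mem_filter, mem_range, mem_singleton]
    constructor
    · rintro ⟨h1, h2⟩; rwa [Nat.mod_eq_of_lt h1] at h2
    · rintro rfl; exact ⟨ha, Nat.mod_eq_of_lt ha⟩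
  rw [h, Finset.card_singleton]

lemma count_zmod_pred (q : ℕ) [NeZero q] (pred : ZMod q → Prop) [DecidablePred pred] :
    ((range q).filter (fun n : ℕ => pred (n : ZMod q))).card
      = (Finset.univ.filter pred).card := by
  refine Finset.card_bij (fun (n : ℕ) (_ : n ∈ (range q).filter (fun n : ℕ => pred (n : ZMod q))) => (n : ZMod q)) ?_ ?_ ?_
  · intro n hn
    simp only [mem_filter, mem_range] at hn ⊢
    exact ⟨Finset.mem_univ _, hn.2⟩
  · intro n₁ h₁ n₂ h₂ h
    simp only [mem_filter, mem_range] at h₁ h₂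
    have := congrArg ZMod.val h
    rwa [ZMod.val_cast_of_lt h₁.1, ZMod.val_cast_of_lt h₂.1] at this
  · intro c hc
    simp only [mem_filter] at hc
    refine ⟨c.val, ?_, ?_⟩
    · simp only [mem_filter, mem_range]
      constructor
      · exact ZMod.val_lt c
      · rw [ZMod.natCast_val, ZMod.cast_id]; exact hc.2
    · show ((c.val : ℕ) : ZMod q) = c
      rw [ZMod.natCast_val, ZMod.cast_id]

lemma count_two_avoid (q b₁ b₂ : ℕ) (hq : 1 < q) :
    ((range q).filter (fun n => ¬(q ∣ (n+b₁)) ∧ ¬(q ∣ (n+b₂)))).card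
      = q - (if (q:ℤ) ∣ (b₁:ℤ) - (b₂:ℤ) then 1 else 2) := by
  haveI : NeZero q := ⟨by omega⟩
  set c₁ : ZMod q := -(b₁ : ZMod q) with hc₁
  set c₂ : ZMod q := -(b₂ : ZMod q) with hc₂
  have key : ∀ n b : ℕ, (q ∣ (n+b)) ↔ (n : ZMod q) = -(b : ZMod q) := by
    intro n b
    rw [← ZMod.natCast_eq_zero_iff, Nat.cast_add, add_eq_zero_iff_eq_neg]
  have h1 : ((range q).filter (fun n => ¬(q ∣ (n+b₁)) ∧ ¬(q ∣ (n+b₂)))).card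
      = ((range q).filter (fun n : ℕ => ((n:ZMod q) ≠ c₁ ∧ (n:ZMod q) ≠ c₂))).card := by
    congr 1
    apply Finset.filter_congr
    intro n _
    rw [key n b₁, key n b₂, hc₁, hc₂]
  rw [h1, count_zmod_pred q (fun x => x ≠ c₁ ∧ x ≠ c₂)]
  have h2 : Finset.univ.filter (fun x : ZMod q => x ≠ c₁ ∧ x ≠ c₂)
      = Finset.univ \ ({c₁, c₂} : Finset (ZMod q)) := by
    ext x
    simp [not_or]
  rw [h2, Finset.card_sdiff_of_subset (Finset.subset_univ _), Finset.card_univ, ZMod.card]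
  congr 1
  have h3 : c₁ = c₂ ↔ (q:ℤ) ∣ (b₁:ℤ) - (b₂:ℤ) := by
    rw [hc₁, hc₂, neg_inj, ZMod.natCast_eq_natCast_iff, Nat.modEq_iff_dvd, dvd_sub_comm]
  by_cases h : (q:ℤ) ∣ (b₁:ℤ) - (b₂:ℤ)
  · rw [if_pos h, h3.mpr h]; simp
  · rw [if_neg h]
    rw [Finset.card_insert_of_notMem (by simp [h3, h]), Finset.card_singleton]
lemma countB (a b₁ b₂ : ℕ) (ha : a < 36) (F : Finset ℕ)
    (hF : ∀ p ∈ F, Nat.Prime p ∧ 5 ≤ p) :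
    ((range (36 * ∏ p ∈ F, p^2)).filter
        (fun n => n % 36 = a ∧ ∀ p ∈ F, ¬(p^2 ∣ n + b₁) ∧ ¬(p^2 ∣ n + b₂))).card
      = ∏ p ∈ F, (p^2 - if (p:ℤ)^2 ∣ (b₁:ℤ) - (b₂:ℤ) then 1 else 2) := by
  induction F using Finset.induction_on with
  | empty =>
    simp only [Finset.prod_empty, mul_one, Finset.notMem_empty, false_implies, implies_true,
      and_true]
    exact count_mod_single 36 a ha
  | @insert p F hpF ih =>
    have hp : Nat.Prime p := (hF p (Finset.mem_insert_self p F)).1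
    have h5 : 5 ≤ p := (hF p (Finset.mem_insert_self p F)).2
    have hF' : ∀ q ∈ F, Nat.Prime q ∧ 5 ≤ q := fun q hq => hF q (Finset.mem_insert_of_mem hq)
    -- coprimality
    have hcop36 : Nat.Coprime p 36 := by
      have h2 : ¬ p ∣ 2 := fun h => by have := Nat.le_of_dvd (by norm_num) h; omega
      have h3 : ¬ p ∣ 3 := fun h => by have := Nat.le_of_dvd (by norm_num) h; omega
      have c2 : Nat.Coprime p 2 := (Nat.Prime.coprime_iff_not_dvd hp).mpr h2
      have c3 : Nat.Coprime p 3 := (Nat.Prime.coprime_iff_not_dvd hp).mpr h3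
      have : (36 : ℕ) = 2^2 * 3^2 := by norm_num
      rw [this]
      exact Nat.Coprime.mul_right (c2.pow_right 2) (c3.pow_right 2)
    have hcopP : Nat.Coprime p (∏ q ∈ F, q^2) := by
      apply Nat.Coprime.prod_right
      intro q hq
      have hqp : Nat.Prime q := (hF' q hq).1
      have hne : p ≠ q := fun h => hpF (h ▸ hq)
      exact ((Nat.coprime_primes hp hqp).mpr hne).pow_right 2
    have hcop : Nat.Coprime (p^2) (36 * ∏ q ∈ F, q^2) :=
      (Nat.Coprime.mul_right hcop36 hcopP).pow_left 2
    rw [Finset.prod_insert hpF, Finset.prod_insert hpF]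
    have hrange : 36 * (p^2 * ∏ q ∈ F, q^2) = p^2 * (36 * ∏ q ∈ F, q^2) := by ring
    rw [hrange]
    have hfc : ∀ n : ℕ,
        (n % 36 = a ∧ ∀ q ∈ insert p F, ¬(q^2 ∣ n + b₁) ∧ ¬(q^2 ∣ n + b₂))
        ↔ ((¬(p^2 ∣ n + b₁) ∧ ¬(p^2 ∣ n + b₂))
            ∧ (n % 36 = a ∧ ∀ q ∈ F, ¬(q^2 ∣ n + b₁) ∧ ¬(q^2 ∣ n + b₂))) := by
      intro n
      simp only [Finset.forall_mem_insert]
      tauto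
    have hfilter :
        ((range (p^2 * (36 * ∏ q ∈ F, q^2))).filter
          (fun n => n % 36 = a ∧ ∀ q ∈ insert p F, ¬(q^2 ∣ n + b₁) ∧ ¬(q^2 ∣ n + b₂)))
        = ((range (p^2 * (36 * ∏ q ∈ F, q^2))).filter
          (fun n => (¬(p^2 ∣ n + b₁) ∧ ¬(p^2 ∣ n + b₂))
            ∧ (n % 36 = a ∧ ∀ q ∈ F, ¬(q^2 ∣ n + b₁) ∧ ¬(q^2 ∣ n + b₂)))) := by
      apply Finset.filter_congr
      intro n _
      exact_mod_cast hfc n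
    rw [hfilter]
    rw [crt_count (p^2) (36 * ∏ q ∈ F, q^2) hcop _ _
      (fun n => by
        constructor
        · rintro ⟨hA, hB⟩
          rw [← dvd_add_mod_iff (p^2) (p^2) n b₁ dvd_rfl] at hA
          rw [← dvd_add_mod_iff (p^2) (p^2) n b₂ dvd_rfl] at hB
          exact ⟨hA, hB⟩
        · rintro ⟨hA, hB⟩
          rw [dvd_add_mod_iff (p^2) (p^2) n b₁ dvd_rfl] at hA
          rw [dvd_add_mod_iff (p^2) (p^2) n b₂ dvd_rfl] at hB
          exact ⟨hA, hB⟩)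
      (fun n => (pred_period a b₁ b₂ F (36 * ∏ q ∈ F, q^2) (Dvd.intro _ rfl)
        (fun q hq => Dvd.dvd.mul_left (Finset.dvd_prod_of_mem (fun x => x^2) hq) 36) n).symm)]
    rw [ih hF']
    rw [count_two_avoid (p^2) b₁ b₂ (by nlinarith [hp.two_le])]
    norm_cast

lemma count_mul_period (P : ℕ → Prop) [DecidablePred P] (T : ℕ)
    (hp : ∀ n, P (n % T) ↔ P n) :
    ∀ k, ((range (k*T)).filter P).card = k * ((range T).filter P).card := by
  intro k
  induction k with
  | zero => simp
  | succ k ih =>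
    have hr : (k+1)*T = k*T + T := by ring
    rw [hr, Finset.range_add, Finset.filter_union, Finset.card_union_of_disjoint, ih]
    · have hc : ((range T).map (addLeftEmbedding (k*T))).filter P
          = ((range T).filter P).map (addLeftEmbedding (k*T)) := by
        rw [Finset.filter_map]
        congr 1
        apply Finset.filter_congr
        intro i _
        show P (addLeftEmbedding (k*T) i) ↔ P i
        have : addLeftEmbedding (k*T) i = k*T + i := rfl
        rw [this]
        rw [← hp (k*T+i), ← hp i]
        have : (k*T + i) % T = i % T := by
          rw [Nat.add_comm, Nat.add_mul_mod_self_right]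
        rw [this]
      rw [hc, Finset.card_map]
      ring
    · rw [Finset.disjoint_left]
      intro n hn hn'
      simp only [mem_filter, mem_range] at hn
      simp only [Finset.mem_filter, Finset.mem_map, mem_range] at hn'
      obtain ⟨⟨i, hi, hin⟩, _⟩ := hn'
      have : addLeftEmbedding (k*T) i = k*T + i := rfl
      rw [this] at hin
      omega

lemma periodic_density (P : ℕ → Prop) [DecidablePred P] (T : ℕ) (hT : 0 < T)
    (hp : ∀ n, P (n % T) ↔ P n) (x : ℕ) (hx : 0 < x) :
    |(((range x).filter P).card : ℝ)/x - (((range T).filter P).card : ℝ)/T| ≤ T/x := by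
  set c := ((range T).filter P).card with hc
  set C := ((range x).filter P).card with hC
  set k := x / T with hk
  have hdm : T * k + x % T = x := Nat.div_add_mod x T
  have hrT : x % T < T := Nat.mod_lt _ hT
  have hlow : k * c ≤ C := by
    rw [← count_mul_period P T hp k]
    apply Finset.card_le_card
    apply Finset.filter_subset_filter
    apply Finset.range_subset_range.mpr
    rw [Nat.mul_comm k T]; omega
  have hhigh : C ≤ (k+1) * c := by
    rw [← count_mul_period P T hp (k+1)]
    apply Finset.card_le_card
    apply Finset.filter_subset_filter
    apply Finset.range_subset_range.mpr
    nlinarith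
  have hcT : c ≤ T := le_trans (Finset.card_filter_le _ _) (by rw [Finset.card_range])
  have hxR : (0:ℝ) < x := by exact_mod_cast hx
  have hTR : (0:ℝ) < T := by exact_mod_cast hT
  have key : |(C:ℝ)/x - (c:ℝ)/T| = |(C:ℝ)*T - c*x| / (x*T) := by
    rw [div_sub_div _ _ hxR.ne' hTR.ne', abs_div, abs_of_pos (mul_pos hxR hTR), mul_comm (x:ℝ) (c:ℝ)]
  rw [key]
  rw [div_le_div_iff₀ (mul_pos hxR hTR) hxR]
  have habs : |(C:ℝ)*T - c*x| ≤ T*T := by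
    have h1 : ((k:ℕ):ℝ) * c ≤ C := by exact_mod_cast hlow
    have h2 : (C:ℝ) ≤ ((k:ℕ):ℝ) * c + c := by
      have : ((k+1) * c : ℕ) = k*c + c := by ring
      have h' := hhigh
      rw [this] at h'
      exact_mod_cast h'
    have h3 : (T:ℝ) * k + (x % T : ℕ) = x := by exact_mod_cast hdm
    have h4 : ((x % T : ℕ):ℝ) < T := by exact_mod_cast hrT
    have h5 : (c:ℝ) ≤ T := by exact_mod_cast hcT
    have h6 : (0:ℝ) ≤ c := by positivity
    have h7 : (0:ℝ) ≤ ((x % T : ℕ):ℝ) := by positivity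
    rw [abs_le]
    constructor
    · nlinarith
    · nlinarith
  calc |(C:ℝ)*T - c*x| * x ≤ (T*T) * x := by
        apply mul_le_mul_of_nonneg_right habs (le_of_lt hxR)
    _ = T * (x*T) := by ring
lemma count_dvd_le (x b q : ℕ) (hq : 0 < q) :
    ((range x).filter (fun n => q ∣ (n + b))).card ≤ x / q + 2 := by
  have hcard : ((range x).filter (fun n => q ∣ (n + b))).card
      ≤ (Finset.Icc (b / q) ((x + b) / q)).card := by
    apply Finset.card_le_card_of_injOn (fun n => (n + b) / q)
    · intro n hn
      simp only [Finset.mem_coe, mem_filter, mem_range] at hn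
      simp only [Finset.mem_coe, Finset.mem_Icc]
      exact ⟨Nat.div_le_div_right (Nat.le_add_left b n),
        Nat.div_le_div_right (by omega)⟩
    · intro n₁ h₁ n₂ h₂ h
      simp only [Finset.coe_filter, Set.mem_setOf_eq, mem_range] at h₁ h₂
      have e₁ : n₁ + b = q * ((n₁ + b) / q) := (Nat.mul_div_cancel' h₁.2).symm
      have e₂ : n₂ + b = q * ((n₂ + b) / q) := (Nat.mul_div_cancel' h₂.2).symm
      have h' : (n₁ + b) / q = (n₂ + b) / q := h
      rw [h'] at e₁
      omega
  have hIcc : (Finset.Icc (b / q) ((x + b) / q)).card = (x + b) / q + 1 - b / q :=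
    Nat.card_Icc _ _
  have hdiv : (x + b) / q ≤ x / q + b / q + 1 := by
    rw [Nat.add_div hq]
    split <;> omega
  have h3 : (x + b) / q + 1 - b / q ≤ x / q + 2 := by
    generalize (x + b) / q = w at hdiv ⊢
    generalize x / q = u at hdiv ⊢
    generalize b / q = v at hdiv ⊢
    omega
  exact hcard.trans (hIcc.le.trans h3)


noncomputable def gN (b₁ b₂ : ℕ) : ℕ → ℝ := fun p =>
  if 5 ≤ p then
    (if ((p : ℤ)) ^ 2 ∣ ((b₁ : ℤ) - b₂) then 1 - 1 / (p : ℝ) ^ 2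
     else 1 - 2 / (p : ℝ) ^ 2)
  else 1

noncomputable def fP (b₁ b₂ : ℕ) : Nat.Primes → ℝ := fun p =>
  if 5 ≤ (p : ℕ) then
    (if ((p : ℤ)) ^ 2 ∣ ((b₁ : ℤ) - b₂) then 1 - 1 / (p : ℝ) ^ 2
     else 1 - 2 / (p : ℝ) ^ 2)
  else 1

lemma fP_eq_gN (b₁ b₂ : ℕ) (p : Nat.Primes) : fP b₁ b₂ p = gN b₁ b₂ (p : ℕ) := rfl

lemma gN_le_one (b₁ b₂ p : ℕ) : gN b₁ b₂ p ≤ 1 := by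
  unfold gN
  split
  · have hpos : (0:ℝ) ≤ (p:ℝ)^2 := by positivity
    rename_i h5
    have h5' : (5:ℝ) ≤ (p:ℝ) := by exact_mod_cast h5
    have hpos' : (0:ℝ) < (p:ℝ)^2 := by nlinarith
    split
    · have : 0 ≤ 1 / (p:ℝ)^2 := by positivity
      linarith
    · have : 0 ≤ 2 / (p:ℝ)^2 := by positivity
      linarith
  · exact le_rfl

lemma gN_pos (b₁ b₂ p : ℕ) : 0 < gN b₁ b₂ p := by
  unfold gN
  split
  · rename_i h5
    have h5' : (5:ℝ) ≤ (p:ℝ) := by exact_mod_cast h5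
    have hsq : (25:ℝ) ≤ (p:ℝ)^2 := by nlinarith
    split
    · have : 1 / (p:ℝ)^2 ≤ 1/25 :=
        div_le_div_of_nonneg_left (by norm_num) (by norm_num) hsq
      linarith
    · have : 2 / (p:ℝ)^2 ≤ 2/25 :=
        div_le_div_of_nonneg_left (by norm_num) (by norm_num) hsq
      linarith
  · norm_num
lemma fP_multipliable (b₁ b₂ : ℕ) : Multipliable (fP b₁ b₂) := by
  have hanti : Antitone (fun s : Finset Nat.Primes => ∏ p ∈ s, fP b₁ b₂ p) := by
    intro s t hst
    simp only
    rw [← Finset.prod_sdiff hst]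
    have h1 : ∏ p ∈ t \ s, fP b₁ b₂ p ≤ 1 :=
      Finset.prod_le_one (fun p _ => (fP_eq_gN b₁ b₂ p ▸ (gN_pos b₁ b₂ p).le))
        (fun p _ => fP_eq_gN b₁ b₂ p ▸ gN_le_one b₁ b₂ p)
    have h2 : 0 ≤ ∏ p ∈ s, fP b₁ b₂ p :=
      Finset.prod_nonneg (fun p _ => (fP_eq_gN b₁ b₂ p ▸ (gN_pos b₁ b₂ p).le))
    nlinarith
  have hbdd : BddBelow (Set.range (fun s : Finset Nat.Primes => ∏ p ∈ s, fP b₁ b₂ p)) := by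
    refine ⟨0, ?_⟩
    rintro y ⟨s, rfl⟩
    exact Finset.prod_nonneg (fun p _ => (fP_eq_gN b₁ b₂ p ▸ (gN_pos b₁ b₂ p).le))
  exact ⟨_, tendsto_atTop_ciInf hanti hbdd⟩

lemma prod_F_tendsto (b₁ b₂ : ℕ) :
    Tendsto (fun D : ℕ => ∏ p ∈ (Finset.range (D+1)).filter
        (fun p => Nat.Prime p ∧ 5 ≤ p), gN b₁ b₂ p)
      atTop (nhds (∏' p : Nat.Primes, fP b₁ b₂ p)) := by
  have h : Tendsto (fun D : ℕ => ∏ p ∈ (Finset.range (D+1)).subtype Nat.Prime, fP b₁ b₂ p)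
      atTop (nhds (∏' p : Nat.Primes, fP b₁ b₂ p)) := by
    apply ((fP_multipliable b₁ b₂).hasProd).comp
    apply tendsto_atTop_finset_of_monotone
    · intro D D' h
      exact Finset.subtype_mono (Finset.range_subset_range.mpr (by omega))
    · intro q
      refine ⟨(q:ℕ), ?_⟩
      rw [Finset.mem_subtype]
      simp only [Finset.mem_range]
      omega
  apply h.congr
  intro D
  calc ∏ p ∈ (Finset.range (D+1)).subtype Nat.Prime, fP b₁ b₂ p
      = ∏ p ∈ (Finset.range (D+1)).subtype Nat.Prime, gN b₁ b₂ (p : ℕ) :=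
        Finset.prod_congr rfl (fun p _ => fP_eq_gN b₁ b₂ p)
    _ = ∏ p ∈ (Finset.range (D+1)).filter Nat.Prime, gN b₁ b₂ p :=
        Finset.prod_subtype_eq_prod_filter (gN b₁ b₂)
    _ = ∏ p ∈ (Finset.range (D+1)).filter (fun p => Nat.Prime p ∧ 5 ≤ p), gN b₁ b₂ p := by
        rw [Finset.prod_filter, Finset.prod_filter]
        apply Finset.prod_congr rfl
        intro p _
        by_cases hp : Nat.Prime p
        · by_cases h5 : 5 ≤ p
          · simp [hp, h5]
          · simp only [hp, h5, if_true, and_false, if_false, true_and]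
            unfold gN
            rw [if_neg h5]
        · simp [hp]

lemma ratio_eq (b₁ b₂ : ℕ) (F : Finset ℕ) (hF : ∀ p ∈ F, Nat.Prime p ∧ 5 ≤ p) :
    ((∏ p ∈ F, (p^2 - if (p:ℤ)^2 ∣ (b₁:ℤ) - (b₂:ℤ) then 1 else 2) : ℕ) : ℝ)
        / ((36 * ∏ p ∈ F, p^2 : ℕ) : ℝ)
      = (1/36) * ∏ p ∈ F, gN b₁ b₂ p := by
  have hterm : ∀ p ∈ F,
      (((p^2 - if (p:ℤ)^2 ∣ (b₁:ℤ) - (b₂:ℤ) then 1 else 2 : ℕ)) : ℝ)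
        = gN b₁ b₂ p * (p:ℝ)^2 := by
    intro p hp
    obtain ⟨hp', h5⟩ := hF p hp
    have hp0 : (0:ℝ) < (p:ℝ) := by
      have := hp'.pos
      exact_mod_cast this
    have h25 : 2 ≤ p^2 := by nlinarith
    unfold gN
    rw [if_pos h5]
    by_cases hd : (p:ℤ)^2 ∣ (b₁:ℤ) - (b₂:ℤ)
    · rw [if_pos hd, if_pos hd, Nat.cast_sub (by omega)]
      push_cast
      field_simp
    · rw [if_neg hd, if_neg hd, Nat.cast_sub h25]
      push_cast
      field_simp
  rw [Nat.cast_prod, Finset.prod_congr rfl hterm, Finset.prod_mul_distrib]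
  have hBpos : (0:ℝ) < ∏ p ∈ F, (p:ℝ)^2 := by
    apply Finset.prod_pos
    intro p hp
    have := (hF p hp).1.pos
    have : (0:ℝ) < (p:ℝ) := by exact_mod_cast this
    positivity
  have hcast : ((36 * ∏ p ∈ F, p^2 : ℕ) : ℝ) = 36 * ∏ p ∈ F, (p:ℝ)^2 := by
    push_cast
    ring
  rw [hcast]
  field_simp

lemma key_bound (b₁ b₂ a : ℕ) (ha : a < 36)
    (h4₁ : ¬(4 ∣ (a + b₁))) (h9₁ : ¬(9 ∣ (a + b₁)))
    (h4₂ : ¬(4 ∣ (a + b₂))) (h9₂ : ¬(9 ∣ (a + b₂)))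
    (D : ℕ) (hD : 1 ≤ D) (x : ℕ) (hx : 0 < x) :
    |(((Finset.range x).filter
        (fun n => n % 36 = a ∧ Squarefree (n + b₁) ∧ Squarefree (n + b₂))).card : ℝ) / x
      - (1/36) * ∏ p ∈ (Finset.range (D+1)).filter (fun p => Nat.Prime p ∧ 5 ≤ p), gN b₁ b₂ p|
    ≤ ((36 * ∏ p ∈ (Finset.range (D+1)).filter (fun p => Nat.Prime p ∧ 5 ≤ p), p^2 : ℕ) : ℝ)/x
      + (6*(x:ℝ) + 4*((b₁+b₂:ℕ):ℝ)) * (1/(D:ℝ)) / x := by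
  set b : ℕ := b₁ + b₂ with hbdef
  set F : Finset ℕ := (Finset.range (D+1)).filter (fun p => Nat.Prime p ∧ 5 ≤ p) with hFdef
  have hFmem : ∀ p ∈ F, Nat.Prime p ∧ 5 ≤ p := fun p hp => (Finset.mem_filter.mp hp).2
  set T : ℕ := 36 * ∏ p ∈ F, p^2 with hTdef
  have hTpos : 0 < T := Nat.mul_pos (by norm_num)
    (Finset.prod_pos (fun p hp => pow_pos (hFmem p hp).1.pos 2))
  -- transfer of divisibility by 4, 9 along n % 36 = a
  have htransfer : ∀ d c : ℕ, d ∣ 36 → ¬ d ∣ a + c → ∀ m : ℕ, m % 36 = a → ¬ d ∣ m + c := by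
    intro d c hd36 hnd m hm hdvd
    apply hnd
    have h1 : m ≡ a [MOD 36] := by unfold Nat.ModEq; rw [hm, Nat.mod_eq_of_lt ha]
    have h2 : m + c ≡ a + c [MOD d] := (h1.of_dvd hd36).add_right c
    exact Nat.modEq_zero_iff_dvd.mp (h2.symm.trans (Nat.modEq_zero_iff_dvd.mpr hdvd))
  -- counts
  set Qx : ℕ := ((Finset.range x).filter
      (fun n => n % 36 = a ∧ Squarefree (n + b₁) ∧ Squarefree (n + b₂))).card with hQdef
  set Px : ℕ := ((Finset.range x).filter
      (fun n => n % 36 = a ∧ ∀ p ∈ F, ¬(p^2 ∣ n + b₁) ∧ ¬(p^2 ∣ n + b₂))).card with hPdef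
  have hsub : (Finset.range x).filter
      (fun n => n % 36 = a ∧ Squarefree (n + b₁) ∧ Squarefree (n + b₂))
      ⊆ (Finset.range x).filter
      (fun n => n % 36 = a ∧ ∀ p ∈ F, ¬(p^2 ∣ n + b₁) ∧ ¬(p^2 ∣ n + b₂)) := by
    intro n hn
    simp only [mem_filter] at hn ⊢
    refine ⟨hn.1, hn.2.1, fun p hp => ?_⟩
    obtain ⟨hp', h5⟩ := hFmem p hp
    constructor
    · intro hdvd
      have hu := hn.2.2.1 p (by rw [← pow_two]; exact hdvd)
      have := Nat.isUnit_iff.mp hu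
      omega
    · intro hdvd
      have hu := hn.2.2.2 p (by rw [← pow_two]; exact hdvd)
      have := Nat.isUnit_iff.mp hu
      omega
  have hQP : Qx ≤ Px := Finset.card_le_card hsub
  -- density of the periodic predicate
  have hper : ∀ n, (fun n => n % 36 = a ∧ ∀ p ∈ F, ¬(p^2 ∣ n + b₁) ∧ ¬(p^2 ∣ n + b₂)) (n % T)
      ↔ (fun n => n % 36 = a ∧ ∀ p ∈ F, ¬(p^2 ∣ n + b₁) ∧ ¬(p^2 ∣ n + b₂)) n := by
    intro n
    exact pred_period a b₁ b₂ F T ⟨∏ p ∈ F, p^2, rfl⟩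
      (fun p hp => dvd_mul_of_dvd_right (Finset.dvd_prod_of_mem (fun q => q^2) hp) 36) n
  have hdens := periodic_density
    (fun n => n % 36 = a ∧ ∀ p ∈ F, ¬(p^2 ∣ n + b₁) ∧ ¬(p^2 ∣ n + b₂)) T hTpos hper x hx
  have hcnt : (((range T).filter
      (fun n => n % 36 = a ∧ ∀ p ∈ F, ¬(p^2 ∣ n + b₁) ∧ ¬(p^2 ∣ n + b₂))).card : ℝ) / T
      = (1/36) * ∏ p ∈ F, gN b₁ b₂ p := by
    rw [show ((range T).filter
        (fun n => n % 36 = a ∧ ∀ p ∈ F, ¬(p^2 ∣ n + b₁) ∧ ¬(p^2 ∣ n + b₂))).card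
        = ∏ p ∈ F, (p^2 - if (p:ℤ)^2 ∣ (b₁:ℤ) - (b₂:ℤ) then 1 else 2) from
      countB a b₁ b₂ ha F hFmem]
    exact ratio_eq b₁ b₂ F hFmem
  rw [hcnt] at hdens
  -- error bound
  set S : Finset ℕ := (range (x+b+1)).filter
      (fun p => Nat.Prime p ∧ D < p ∧ p*p ≤ x + b) with hSdef
  have hdiff : (Finset.range x).filter
        (fun n => n % 36 = a ∧ ∀ p ∈ F, ¬(p^2 ∣ n + b₁) ∧ ¬(p^2 ∣ n + b₂))
        \ (Finset.range x).filter
        (fun n => n % 36 = a ∧ Squarefree (n + b₁) ∧ Squarefree (n + b₂))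
      ⊆ S.biUnion (fun p => (range x).filter (fun n => p^2 ∣ n + b₁ ∨ p^2 ∣ n + b₂)) := by
    intro n hn
    simp only [Finset.mem_sdiff, mem_filter, mem_range, not_and] at hn
    obtain ⟨⟨hnx, hn36, hnF⟩, hnt⟩ := hn
    have hnsf : Squarefree (n+b₁) → ¬ Squarefree (n+b₂) := hnt hnx hn36
    have hex : ∃ p, Nat.Prime p ∧ (p*p ∣ n + b₁ ∨ p*p ∣ n + b₂) := by
      by_cases h1 : Squarefree (n + b₁)
      · have h2 : ¬ Squarefree (n + b₂) := hnsf h1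
        rw [Nat.squarefree_iff_prime_squarefree] at h2
        push_neg at h2
        obtain ⟨p, hp, hd⟩ := h2
        exact ⟨p, hp, Or.inr hd⟩
      · rw [Nat.squarefree_iff_prime_squarefree] at h1
        push_neg at h1
        obtain ⟨p, hp, hd⟩ := h1
        exact ⟨p, hp, Or.inl hd⟩
    obtain ⟨p, hp, hpd⟩ := hex
    have h5 : 5 ≤ p := by
      by_contra h5'
      push_neg at h5'
      have h2le := hp.two_le
      interval_cases p
      · rcases hpd with hd | hd
        · exact htransfer 4 b₁ (by norm_num) h4₁ n hn36 hd
        · exact htransfer 4 b₂ (by norm_num) h4₂ n hn36 hd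
      · rcases hpd with hd | hd
        · exact htransfer 9 b₁ (by norm_num) h9₁ n hn36 hd
        · exact htransfer 9 b₂ (by norm_num) h9₂ n hn36 hd
      · exact (by norm_num : ¬ Nat.Prime 4) hp
    have hDp : D < p := by
      by_contra hle
      push_neg at hle
      have hpF : p ∈ F := by
        rw [hFdef]
        simp only [mem_filter, mem_range]
        exact ⟨by omega, hp, h5⟩
      obtain ⟨hA, hB⟩ := hnF p hpF
      rcases hpd with hd | hd
      · exact hA (by rw [pow_two]; exact hd)
      · exact hB (by rw [pow_two]; exact hd)
    have hup : p*p ≤ x + b := by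
      rcases hpd with hd | hd
      · have hpos : 0 < n + b₁ := by
          rcases Nat.eq_zero_or_pos (n+b₁) with h0 | h
          · exact absurd (by rw [h0]; exact dvd_zero 4 : (4:ℕ) ∣ n + b₁)
              (htransfer 4 b₁ (by norm_num) h4₁ n hn36)
          · exact h
        have := Nat.le_of_dvd hpos hd
        omega
      · have hpos : 0 < n + b₂ := by
          rcases Nat.eq_zero_or_pos (n+b₂) with h0 | h
          · exact absurd (by rw [h0]; exact dvd_zero 4 : (4:ℕ) ∣ n + b₂)
              (htransfer 4 b₂ (by norm_num) h4₂ n hn36)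
          · exact h
        have := Nat.le_of_dvd hpos hd
        omega
    have hpS : p ∈ S := by
      rw [hSdef]
      simp only [mem_filter, mem_range]
      have hple : p ≤ p*p := Nat.le_mul_of_pos_left p hp.pos
      exact ⟨by omega, hp, hDp, hup⟩
    rw [Finset.mem_biUnion]
    refine ⟨p, hpS, ?_⟩
    simp only [mem_filter, mem_range]
    refine ⟨hnx, ?_⟩
    rcases hpd with hd | hd
    · exact Or.inl (by rw [pow_two]; exact hd)
    · exact Or.inr (by rw [pow_two]; exact hd)
  -- cardinality chain over ℕ
  have hcard1 : Px - Qx ≤ ∑ p ∈ S, (2*(x / p^2) + 4) := by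
    have e1 : Px - Qx = (((Finset.range x).filter
        (fun n => n % 36 = a ∧ ∀ p ∈ F, ¬(p^2 ∣ n + b₁) ∧ ¬(p^2 ∣ n + b₂)))
        \ ((Finset.range x).filter
        (fun n => n % 36 = a ∧ Squarefree (n + b₁) ∧ Squarefree (n + b₂)))).card :=
      (Finset.card_sdiff_of_subset hsub).symm
    rw [e1]
    calc _ ≤ (S.biUnion (fun p => (range x).filter
            (fun n => p^2 ∣ n + b₁ ∨ p^2 ∣ n + b₂))).card := Finset.card_le_card hdiff
      _ ≤ ∑ p ∈ S, ((range x).filter (fun n => p^2 ∣ n + b₁ ∨ p^2 ∣ n + b₂)).card :=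
          Finset.card_biUnion_le
      _ ≤ ∑ p ∈ S, (2*(x / p^2) + 4) := by
          apply Finset.sum_le_sum
          intro p hpS
          have hppos : 0 < p^2 := by
            have := ((Finset.mem_filter.mp hpS).2.1).pos
            positivity
          have hsplit : (range x).filter (fun n => p^2 ∣ n + b₁ ∨ p^2 ∣ n + b₂)
              = ((range x).filter (fun n => p^2 ∣ n + b₁))
                ∪ ((range x).filter (fun n => p^2 ∣ n + b₂)) :=
            Finset.filter_or _ _ _
          rw [hsplit]
          calc _ ≤ ((range x).filter (fun n => p^2 ∣ n + b₁)).card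
                + ((range x).filter (fun n => p^2 ∣ n + b₂)).card := Finset.card_union_le _ _
            _ ≤ (x / p^2 + 2) + (x / p^2 + 2) :=
                Nat.add_le_add (count_dvd_le x b₁ (p^2) hppos) (count_dvd_le x b₂ (p^2) hppos)
            _ = 2*(x / p^2) + 4 := by ring
  -- to the reals
  have hstep : (Px:ℝ) - Qx ≤ ((∑ p ∈ S, (2*(x / p^2) + 4) : ℕ) : ℝ) := by
    have h' : ((Px - Qx : ℕ):ℝ) ≤ ((∑ p ∈ S, (2*(x / p^2) + 4) : ℕ) : ℝ) := by
      exact_mod_cast hcard1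
    rw [Nat.cast_sub hQP] at h'
    exact h'
  have hsum2 : ((∑ p ∈ S, (2*(x / p^2) + 4) : ℕ) : ℝ)
      ≤ ∑ p ∈ S, ((6*(x:ℝ) + 4*(b:ℝ)) * ((p:ℝ)^2)⁻¹) := by
    rw [Nat.cast_sum]
    apply Finset.sum_le_sum
    intro p hpS
    rw [hSdef] at hpS
    simp only [mem_filter, mem_range] at hpS
    obtain ⟨hplt, hp, hDp, hple⟩ := hpS
    have hp0 : (0:ℝ) < (p:ℝ) := by exact_mod_cast hp.pos
    have hp2 : (0:ℝ) < (p:ℝ)^2 := by positivity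
    have h1 : ((x / p^2 : ℕ) : ℝ) ≤ (x:ℝ)/(p:ℝ)^2 := by
      have h := Nat.cast_div_le (α := ℝ) (m := x) (n := p^2)
      push_cast at h
      exact h
    have h2 : (1:ℝ) ≤ ((x:ℝ)+(b:ℝ))/(p:ℝ)^2 := by
      rw [le_div_iff₀ hp2]
      have hc : (p:ℝ)*(p:ℝ) ≤ (x:ℝ)+(b:ℝ) := by exact_mod_cast hple
      nlinarith
    have heq : 2*((x:ℝ)/(p:ℝ)^2) + 4*(((x:ℝ)+(b:ℝ))/(p:ℝ)^2)
        = (6*(x:ℝ)+4*(b:ℝ)) * ((p:ℝ)^2)⁻¹ := by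
      field_simp
      ring
    push_cast
    nlinarith [h1, h2]
  have hsum3 : ∑ p ∈ S, ((p:ℝ)^2)⁻¹ ≤ 1/(D:ℝ) := by
    have hsubIoc : S ⊆ Finset.Ioc D (max D (x+b)) := by
      intro p hpel
      rw [hSdef] at hpel
      simp only [mem_filter, mem_range] at hpel
      obtain ⟨hplt, hp, hDp, hple⟩ := hpel
      simp only [Finset.mem_Ioc]
      have hple' : p ≤ p*p := Nat.le_mul_of_pos_left p hp.pos
      exact ⟨hDp, le_max_of_le_right (by omega)⟩
    calc ∑ p ∈ S, ((p:ℝ)^2)⁻¹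
        ≤ ∑ i ∈ Finset.Ioc D (max D (x+b)), ((i:ℝ)^2)⁻¹ :=
          Finset.sum_le_sum_of_subset_of_nonneg hsubIoc (fun i _ _ => by positivity)
      _ ≤ (D:ℝ)⁻¹ - ((max D (x+b) : ℕ):ℝ)⁻¹ :=
          sum_Ioc_inv_sq_le_sub (by omega) (le_max_left _ _)
      _ ≤ 1/(D:ℝ) := by
          rw [one_div]
          have : (0:ℝ) ≤ ((max D (x+b) : ℕ):ℝ)⁻¹ := by positivity
          linarith
  have herr : (Px:ℝ) - Qx ≤ (6*(x:ℝ) + 4*(b:ℝ)) * (1/(D:ℝ)) := by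
    have hnn : (0:ℝ) ≤ 6*(x:ℝ) + 4*(b:ℝ) := by positivity
    calc (Px:ℝ) - Qx ≤ ((∑ p ∈ S, (2*(x / p^2) + 4) : ℕ) : ℝ) := hstep
      _ ≤ ∑ p ∈ S, ((6*(x:ℝ) + 4*(b:ℝ)) * ((p:ℝ)^2)⁻¹) := hsum2
      _ = (6*(x:ℝ) + 4*(b:ℝ)) * ∑ p ∈ S, ((p:ℝ)^2)⁻¹ := by rw [Finset.mul_sum]
      _ ≤ (6*(x:ℝ) + 4*(b:ℝ)) * (1/(D:ℝ)) := by
          exact mul_le_mul_of_nonneg_left hsum3 hnn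
  -- final triangle inequality
  have hxR : (0:ℝ) < (x:ℝ) := by exact_mod_cast hx
  have habs1 : |(Qx:ℝ)/x - (Px:ℝ)/x| ≤ (6*(x:ℝ) + 4*(b:ℝ)) * (1/(D:ℝ)) / x := by
    have hQPx : (Qx:ℝ)/x ≤ (Px:ℝ)/x := by
      gcongr

    rw [abs_sub_comm, abs_of_nonneg (sub_nonneg.mpr hQPx), div_sub_div_same]
    exact (div_le_div_iff_of_pos_right hxR).mpr herr
  calc |(Qx:ℝ)/x - (1/36) * ∏ p ∈ F, gN b₁ b₂ p|
      ≤ |(Qx:ℝ)/x - (Px:ℝ)/x| + |(Px:ℝ)/x - (1/36) * ∏ p ∈ F, gN b₁ b₂ p| :=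
        abs_sub_le _ _ _
    _ ≤ (6*(x:ℝ) + 4*(b:ℝ)) * (1/(D:ℝ)) / x + (T:ℝ)/x := add_le_add habs1 hdens
    _ = (T:ℝ)/x + (6*(x:ℝ) + 4*(b:ℝ)) * (1/(D:ℝ)) / x := by ring
/-- Density of n in a fixed class a mod 36 (avoiding divisibility of n+b₁, n+b₂ by
4 and 9) such that both n+b₁ and n+b₂ are squarefree, equals
(1/36)·∏_{p≥5, p²∣b₁−b₂}(1−1/p²)·∏_{p≥5, p²∤b₁−b₂}(1−2/p²). -/
theorem stmt_3 (b₁ b₂ : ℕ) (a : ℕ) (ha : a < 36)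
    (h4₁ : ¬(4 ∣ (a + b₁))) (h9₁ : ¬(9 ∣ (a + b₁)))
    (h4₂ : ¬(4 ∣ (a + b₂))) (h9₂ : ¬(9 ∣ (a + b₂))) :
    Tendsto
      (fun x : ℕ =>
        (((Finset.range x).filter
          (fun n => n % 36 = a ∧ Squarefree (n + b₁) ∧ Squarefree (n + b₂))).card : ℝ) / x)
      atTop
      (nhds ((1 / 36) *
        ∏' p : Nat.Primes,
          (if 5 ≤ (p : ℕ) then
            (if ((p : ℤ)) ^ 2 ∣ ((b₁ : ℤ) - b₂) then 1 - 1 / (p : ℝ) ^ 2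
             else 1 - 2 / (p : ℝ) ^ 2)
           else 1))) := by
  show Tendsto _ atTop (nhds ((1/36) * ∏' p : Nat.Primes, fP b₁ b₂ p))
  set L : ℝ := (1/36) * ∏' p : Nat.Primes, fP b₁ b₂ p with hL
  have htd : Tendsto (fun D : ℕ => (1/36) * ∏ p ∈ (Finset.range (D+1)).filter
      (fun p => Nat.Prime p ∧ 5 ≤ p), gN b₁ b₂ p) atTop (nhds L) :=
    (prod_F_tendsto b₁ b₂).const_mul (1/36)
  rw [Metric.tendsto_atTop]
  intro ε hε
  obtain ⟨D₀, hD₀⟩ := Metric.tendsto_atTop.mp htd (ε/4) (by positivity)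
  set D : ℕ := max D₀ (max 1 ⌈(24:ℝ)/ε⌉₊) with hDdef
  have hD1 : 1 ≤ D := le_trans (le_max_left 1 _) (le_max_right D₀ _)
  have hDR : (24:ℝ)/ε ≤ (D:ℝ) := by
    calc (24:ℝ)/ε ≤ (⌈(24:ℝ)/ε⌉₊:ℝ) := Nat.le_ceil _
      _ ≤ (D:ℝ) := by
          exact_mod_cast le_trans (le_max_right 1 _) (le_max_right D₀ _)
  have hDpos : (0:ℝ) < D := by
    have : (0:ℕ) < D := by omega
    exact_mod_cast this
  have hdist : |(1/36) * ∏ p ∈ (Finset.range (D+1)).filter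
      (fun p => Nat.Prime p ∧ 5 ≤ p), gN b₁ b₂ p - L| < ε/4 := by
    have := hD₀ D (le_max_left _ _)
    rwa [Real.dist_eq] at this
  have h6D : 6/(D:ℝ) ≤ ε/4 := by
    have h1 : (0:ℝ) < 24/ε := by positivity
    have h2 : 6/(D:ℝ) ≤ 6/((24:ℝ)/ε) :=
      div_le_div_of_nonneg_left (by norm_num) h1 hDR
    have h3 : (6:ℝ)/((24:ℝ)/ε) = ε/4 := by
      field_simp
      ring
    linarith
  -- eventual bounds
  set TD : ℕ := 36 * ∏ p ∈ (Finset.range (D+1)).filter (fun p => Nat.Prime p ∧ 5 ≤ p), p^2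
    with hTD
  have ev1 : ∀ᶠ x : ℕ in atTop, (TD:ℝ)/(x:ℝ) < ε/4 :=
    (tendsto_const_div_atTop_nhds_zero_nat (TD:ℝ)).eventually (gt_mem_nhds (by positivity))
  have ev2 : ∀ᶠ x : ℕ in atTop, (4*((b₁+b₂:ℕ):ℝ)/(D:ℝ))/(x:ℝ) < ε/4 :=
    (tendsto_const_div_atTop_nhds_zero_nat (4*((b₁+b₂:ℕ):ℝ)/(D:ℝ))).eventually
      (gt_mem_nhds (by positivity))
  have ev0 : ∀ᶠ x : ℕ in atTop, 0 < x := eventually_gt_atTop 0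
  obtain ⟨N, hN⟩ := Filter.eventually_atTop.mp ((ev0.and ev1).and ev2)
  refine ⟨N, fun x hxN => ?_⟩
  obtain ⟨⟨hx, h1⟩, h2⟩ := hN x hxN
  rw [Real.dist_eq]
  have hxR : (0:ℝ) < (x:ℝ) := by exact_mod_cast hx
  have hkey := key_bound b₁ b₂ a ha h4₁ h9₁ h4₂ h9₂ D hD1 x hx
  have hsplit : (6*(x:ℝ) + 4*((b₁+b₂:ℕ):ℝ)) * (1/(D:ℝ)) / (x:ℝ)
      = 6/(D:ℝ) + (4*((b₁+b₂:ℕ):ℝ)/(D:ℝ))/(x:ℝ) := by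
    field_simp
  calc |(((Finset.range x).filter
        (fun n => n % 36 = a ∧ Squarefree (n + b₁) ∧ Squarefree (n + b₂))).card : ℝ) / x - L|
      ≤ |(((Finset.range x).filter
          (fun n => n % 36 = a ∧ Squarefree (n + b₁) ∧ Squarefree (n + b₂))).card : ℝ) / x
          - (1/36) * ∏ p ∈ (Finset.range (D+1)).filter (fun p => Nat.Prime p ∧ 5 ≤ p),
              gN b₁ b₂ p|
        + |(1/36) * ∏ p ∈ (Finset.range (D+1)).filter (fun p => Nat.Prime p ∧ 5 ≤ p),
              gN b₁ b₂ p - L| := abs_sub_le _ _ _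
    _ ≤ ((TD:ℕ):ℝ)/x + (6*(x:ℝ) + 4*((b₁+b₂:ℕ):ℝ)) * (1/(D:ℝ)) / x + ε/4 := by
        apply add_le_add hkey hdist.le
    _ = (TD:ℝ)/x + (6/(D:ℝ) + (4*((b₁+b₂:ℕ):ℝ)/(D:ℝ))/(x:ℝ)) + ε/4 := by rw [hsplit]
    _ < ε/4 + (ε/4 + ε/4) + ε/4 := by
        apply add_lt_add_of_lt_of_le ?_ le_rfl
        apply add_lt_add h1
        apply add_lt_add_of_le_of_lt h6D h2
    _ = ε := by ring
end

section
/- Fix k ≥ 2 and set q = ∏_{i=2}^{k} p_i², where p_i is the i-th prime. Let A = A₁ ∪ A₂ where A₁ = {n ∈ ℕ : 4 | n and gcd(n, q) is not squarefree} and A₂ = {n ∈ ℕ : q | n}. Then A + A contains no squarefree integer. -/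
/-- With q = ∏_{i=2}^{k} p_i² (p_i the i-th prime, k ≥ 2) and
A = {n : 4 ∣ n, gcd(n,q) not squarefree} ∪ {n : q ∣ n}, the sumset A + A
contains no squarefree integer. -/
theorem stmt_6 (k : ℕ) (hk : 2 ≤ k)
    (q : ℕ) (hq : q = ∏ i ∈ Finset.Icc 2 k, (Nat.nth Nat.Prime (i - 1)) ^ 2)
    (A : Set ℕ)
    (hA : A = {n : ℕ | 4 ∣ n ∧ ¬ Squarefree (Nat.gcd n q)} ∪ {n : ℕ | q ∣ n}) :
    ∀ a ∈ A, ∀ b ∈ A, ¬ Squarefree (a + b) := by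
  have h9 : 9 ∣ q := by
    rw [hq]
    have h2 : (2 : ℕ) ∈ Finset.Icc 2 k := Finset.mem_Icc.mpr ⟨le_refl 2, hk⟩
    have := Finset.dvd_prod_of_mem (fun i => (Nat.nth Nat.Prime (i - 1)) ^ 2) h2
    norm_num [Nat.nth_prime_one_eq_three] at this
    convert this using 1
  subst hA
  rintro a (⟨h4a, hga⟩ | hqa) b (⟨h4b, hgb⟩ | hqb)
  · intro hsf
    have h4 : (2 : ℕ) * 2 ∣ a + b := by
      have : (4 : ℕ) ∣ a + b := dvd_add h4a h4b
      simpa using this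
    exact (Nat.prime_two).not_isUnit (hsf 2 h4)
  · -- a in A1, b in A2 : some x with x*x ∣ gcd a q, x*x ∣ b
    rw [Squarefree] at hga
    push_neg at hga
    obtain ⟨x, hx, hxu⟩ := hga
    intro hsf
    exact hxu (hsf x (dvd_add (hx.trans (Nat.gcd_dvd_left a q))
      ((hx.trans (Nat.gcd_dvd_right a q)).trans hqb)))
  · rw [Squarefree] at hgb
    push_neg at hgb
    obtain ⟨x, hx, hxu⟩ := hgb
    intro hsf
    exact hxu (hsf x (dvd_add ((hx.trans (Nat.gcd_dvd_right b q)).trans hqa)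
      (hx.trans (Nat.gcd_dvd_left b q))))
  · intro hsf
    have h9ab : (3 : ℕ) * 3 ∣ a + b := by
      have : (9 : ℕ) ∣ a + b := h9.trans (dvd_add hqa hqb)
      simpa using this
    exact (Nat.prime_three).not_isUnit (hsf 3 h9ab)
end

section
/- Let q ≥ 1 be an odd integer. Then every integer n > 764 + 3q can be written as n = 36x + 100y + qz with x, y, z nonnegative integers. -/
/-- Every k ≥ 192 is of the form 9x + 25y (Frobenius number of 9, 25 is 191). -/
lemma rep9_25 (k : ℕ) (hk : 192 ≤ k) : ∃ x y : ℕ, k = 9 * x + 25 * y :=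
  ⟨(k - 25 * ((4 * k) % 9)) / 9, (4 * k) % 9, by omega⟩

/-- For odd q ≥ 1, every n > 764 + 3q is of the form 36x + 100y + qz. -/
theorem stmt_11 (q : ℕ) (hq1 : 1 ≤ q) (hq : Odd q) :
    ∀ n : ℕ, 764 + 3 * q < n → ∃ x y z : ℕ, n = 36 * x + 100 * y + q * z := by
  intro n hn
  have h4 : q % 4 = 1 ∨ q % 4 = 3 := by obtain ⟨a, ha⟩ := hq; omega
  have key : ∃ z : ℕ, z ≤ 3 ∧ (n - q * z) % 4 = 0 := by
    have hn4 : n % 4 = 0 ∨ n % 4 = 1 ∨ n % 4 = 2 ∨ n % 4 = 3 := by omega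
    rcases h4 with h | h <;> rcases hn4 with h' | h' | h' | h'
    · exact ⟨0, by omega, by omega⟩
    · exact ⟨1, by omega, by omega⟩
    · exact ⟨2, by omega, by omega⟩
    · exact ⟨3, by omega, by omega⟩
    · exact ⟨0, by omega, by omega⟩
    · exact ⟨3, by omega, by omega⟩
    · exact ⟨2, by omega, by omega⟩
    · exact ⟨1, by omega, by omega⟩
  obtain ⟨z, hz3, hzm⟩ := key
  have ht : q * z ≤ 3 * q := by nlinarith
  obtain ⟨x, y, hxy⟩ := rep9_25 ((n - q * z) / 4) (by omega)
  exact ⟨x, y, z, by omega⟩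
end

section
/- 1 − 18/π² + (24/25)·∏_{p prime, p ≥ 7}(1 − 2/p²) < 0.0473, i.e. this expression is strictly less than 1/4 − 2/π². -/
open Real

noncomputable def g18 (n : ℕ) : ℝ := if 7 ≤ n then 1 - 2 / (n : ℝ) ^ 2 else 1

lemma g18_pos (p : Nat.Primes) : 0 < g18 (p : ℕ) := by
  unfold g18
  split
  · have h7 : (7:ℝ) ≤ (p:ℕ) := by exact_mod_cast ‹7 ≤ (p:ℕ)›
    have : (2:ℝ) / (p:ℕ)^2 ≤ 2/49 := by
      apply div_le_div_of_nonneg_left (by norm_num) (by norm_num)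
      nlinarith
    linarith
  · norm_num

lemma g18_le_one (p : Nat.Primes) : g18 (p : ℕ) ≤ 1 := by
  unfold g18
  split
  · have hp : (0:ℝ) < (p:ℕ) := by
      have := p.2.pos; exact_mod_cast this
    have : (0:ℝ) ≤ 2 / (p:ℕ)^2 := by positivity
    linarith
  · exact le_rfl

lemma neglog_le (p : Nat.Primes) : -Real.log (g18 (p : ℕ)) ≤ 4 / (p : ℕ)^2 := by
  unfold g18
  split
  · have h7 : (7:ℝ) ≤ (p:ℕ) := by exact_mod_cast ‹7 ≤ (p:ℕ)›
    set x : ℝ := 2 / (p:ℕ)^2 with hx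
    have hx0 : 0 < x := by positivity
    have hx49 : x ≤ 2/49 := by
      rw [hx]
      apply div_le_div_of_nonneg_left (by norm_num) (by norm_num)
      nlinarith
    have h1x : 0 < 1 - x := by linarith
    have := Real.log_le_sub_one_of_pos (x := (1-x)⁻¹) (by positivity)
    rw [Real.log_inv] at this
    have hinv : (1-x)⁻¹ - 1 = x / (1-x) := by field_simp; ring
    have h2 : x / (1-x) ≤ 2 * x := by
      rw [div_le_iff₀ h1x]; nlinarith
    have hfin : -Real.log (1 - x) ≤ 2 * x := by linarith [this, hinv ▸ this]
    have : 2 * x ≤ 4 / (p:ℕ)^2 := by rw [hx]; ring_nf; nlinarith [sq_nonneg ((p:ℝ))]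
    linarith
  · simp only [Real.log_one, neg_zero]
    positivity

lemma summable_neglog : Summable (fun p : Nat.Primes => -Real.log (g18 (p : ℕ))) := by
  have hmaj : Summable (fun p : Nat.Primes => 4 / ((p : ℕ) : ℝ)^2) := by
    have h1 : Summable (fun n : ℕ => 4 * (1 / (n : ℝ)^2)) :=
      (Real.summable_one_div_nat_pow.mpr one_lt_two).mul_left 4
    have h2 : Summable (fun n : ℕ => 4 / (n : ℝ)^2) := by
      simpa [div_eq_mul_inv, mul_comm] using h1
    exact h2.comp_injective Nat.Primes.coe_nat_injective
  apply Summable.of_nonneg_of_le _ (fun p => neglog_le p) hmaj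
  intro p
  have := Real.log_nonpos (le_of_lt (g18_pos p)) (g18_le_one p)
  linarith


lemma summable_log18 : Summable (fun p : Nat.Primes => Real.log (g18 (p : ℕ))) := by
  simpa using summable_neglog.neg

lemma tprod_eq_exp :
    (∏' p : Nat.Primes, g18 (p : ℕ)) = rexp (∑' p : Nat.Primes, Real.log (g18 (p : ℕ))) := by
  have := Real.rexp_tsum_eq_tprod (f := fun (p : Nat.Primes) => g18 (p : ℕ))
    (fun p => g18_pos p) summable_log18
  exact this.symm

lemma tprod_le_finprod :
    (∏' p : Nat.Primes, g18 (p : ℕ)) ≤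
      ∏ n ∈ (Finset.Icc 7 61).filter Nat.Prime, g18 n := by
  classical
  set S : Finset Nat.Primes := (Finset.Icc 7 61).subtype Nat.Prime with hS
  have hsum : ∑ p ∈ S, -Real.log (g18 (p : ℕ)) ≤
      ∑' p : Nat.Primes, -Real.log (g18 (p : ℕ)) := by
    refine Summable.sum_le_tsum S (fun p _ => ?_) summable_neglog
    have := Real.log_nonpos (le_of_lt (g18_pos p)) (g18_le_one p)
    linarith
  have htsum : (∑' p : Nat.Primes, Real.log (g18 (p : ℕ))) ≤
      ∑ p ∈ S, Real.log (g18 (p : ℕ)) := by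
    have h1 : (∑' p : Nat.Primes, -Real.log (g18 (p : ℕ)))
        = -∑' p : Nat.Primes, Real.log (g18 (p : ℕ)) := tsum_neg
    have h2 : ∑ p ∈ S, -Real.log (g18 (p : ℕ)) = -∑ p ∈ S, Real.log (g18 (p : ℕ)) := by
      rw [Finset.sum_neg_distrib]
    rw [h1, h2] at hsum
    linarith
  calc (∏' p : Nat.Primes, g18 (p : ℕ))
      = rexp (∑' p : Nat.Primes, Real.log (g18 (p : ℕ))) := tprod_eq_exp
    _ ≤ rexp (∑ p ∈ S, Real.log (g18 (p : ℕ))) := Real.exp_le_exp.mpr htsum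
    _ = ∏ p ∈ S, rexp (Real.log (g18 (p : ℕ))) := Real.exp_sum _ _
    _ = ∏ p ∈ S, g18 (p : ℕ) := Finset.prod_congr rfl (fun p _ => Real.exp_log (g18_pos p))
    _ = ∏ n ∈ (Finset.Icc 7 61).filter Nat.Prime, g18 n :=
        Finset.prod_subtype_eq_prod_filter _

lemma filt_eq : (Finset.Icc 7 61).filter Nat.Prime =
    ({7,11,13,17,19,23,29,31,37,41,43,47,53,59,61} : Finset ℕ) := by decide

lemma finprod_val : (∏ n ∈ (Finset.Icc 7 61).filter Nat.Prime, g18 n) =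
    712648065799601488684477580212969 / 785601508927375495081796722152071 := by
  rw [filt_eq]
  rw [show ({7,11,13,17,19,23,29,31,37,41,43,47,53,59,61} : Finset ℕ) =
    {7,11,13,17,19,23,29,31,37,41,43,47,53,59,61} from rfl]
  repeat rw [Finset.prod_insert (by decide)]
  rw [Finset.prod_singleton]
  norm_num [g18]

/-- 1 − 18/π² + (24/25)·∏_{p prime, p ≥ 7}(1 − 2/p²) < 1/4 − 2/π². -/
theorem stmt_18 :
    1 - 18 / π ^ 2 +
      (24 / 25) * ∏' p : Nat.Primes, (if 7 ≤ (p : ℕ) then 1 - 2 / (p : ℝ) ^ 2 else 1) <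
    1 / 4 - 2 / π ^ 2 := by
  have heq : (∏' p : Nat.Primes, (if 7 ≤ (p : ℕ) then 1 - 2 / (p : ℝ) ^ 2 else 1))
      = ∏' p : Nat.Primes, g18 (p : ℕ) := by
    refine tprod_congr fun p => ?_
    simp [g18]
  have hT : (∏' p : Nat.Primes, g18 (p : ℕ)) ≤
      (712648065799601488684477580212969 : ℝ) / 785601508927375495081796722152071 := by
    calc _ ≤ _ := tprod_le_finprod
      _ = _ := finprod_val
  rw [heq]
  have hpi1 : π < 3.141593 := Real.pi_lt_d6
  have hpi0 : 3.141592 < π := Real.pi_gt_d6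
  have hpisq : π ^ 2 < 3.141593 ^ 2 := by nlinarith
  have hpipos : (0:ℝ) < π ^ 2 := by positivity
  have h16 : (16 : ℝ) / 3.141593 ^ 2 ≤ 16 / π ^ 2 :=
    div_le_div_of_nonneg_left (by norm_num) hpipos (le_of_lt hpisq)
  have key : (24/25 : ℝ) * (712648065799601488684477580212969 / 785601508927375495081796722152071)
      < 16 / 3.141593 ^ 2 - 3 / 4 := by norm_num
  have : 1 - 18 / π ^ 2 + (24/25) * (∏' p : Nat.Primes, g18 (p : ℕ))
      ≤ 1 - 18 / π ^ 2 + (24/25) * (712648065799601488684477580212969 / 785601508927375495081796722152071) := by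
    nlinarith
  have hgoal : 1 - 18 / π ^ 2 + (24/25 : ℝ) * (712648065799601488684477580212969 / 785601508927375495081796722152071)
      < 1 / 4 - 2 / π ^ 2 := by
    have : (16 : ℝ) / π ^ 2 = 18 / π ^ 2 - 2 / π ^ 2 := by ring
    linarith [h16, key]
  linarith
end
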